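/- For all natural numbers m₁ and m₂ with m₁ + m₂ odd, and for every real x with x ≠ ±1, U_{m₁}(x)·U_{m₂}(x) = T^{ns}_{|m₁−m₂|}(x) − T^{ns}_{m₁+m₂+2}(x), where T^{ns}_n(x) = (T_n(x)−x)/(2(1−x²)) for odd n. -/
import Mathlib

open Polynomial Polynomial.Chebyshev

/-- Nonsingular Chebyshev function for odd index. -/
noncomputable def TnsOdd (n : ℤ) (x : ℝ) : ℝ :=
  ((T ℝ n).eval x - x) / (2 * (1 - x ^ 2))

lemma two_one_sub_X_sq_mul_U_mul_U (R : Type*) [CommRing R] (a b : ℤ) :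
    2 * (1 - X ^ 2) * U R a * U R b = T R (a - b) - T R (a + b + 2) := by
  induction b using Polynomial.Chebyshev.induct with
  | zero =>
    have h := one_sub_X_sq_mul_U_eq_pol_in_T R a
    have h2 := T_add_two R a
    simp only [U_zero, mul_one]
    linear_combination (norm := ring_nf) 2 * h - h2
  | one =>
    rw [U_one]
    have h := one_sub_X_sq_mul_U_eq_pol_in_T R a
    have h2 := T_add_two R (a + 1)
    have h3 := T_sub_one R a
    have h4 := T_add_two R a
    linear_combination (norm := ring_nf)
      4 * (X : R[X]) * h - 2 * (X : R[X]) * h4 - h3 + h2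
  | add_two b ih1 ih2 =>
    have h1 := U_add_two R b
    have h2 := T_sub_two R (a - b)
    have h3 := T_add_two R (a + b + 2)
    linear_combination (norm := ring_nf)
      2 * (1 - (X:R[X]) ^ 2) * U R a * h1 + 2 * (X:R[X]) * ih1 - ih2 - h2 + h3
  | neg_add_one b ih1 ih2 =>
    have h1 := U_add_two R (-b - 1)
    have h2 := T_add_two R (a + b - 1)
    have h3 := T_add_two R (a - b + 1)
    linear_combination (norm := ring_nf)
      2 * (1 - (X:R[X]) ^ 2) * U R a * h1 + 2 * (X:R[X]) * ih1 - ih2 - h2 + h3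

theorem U_product_eq_Tns_odd (m₁ m₂ : ℕ) (h : Odd (m₁ + m₂)) (x : ℝ)
    (hx1 : x ≠ 1) (hx2 : x ≠ -1) :
    (U ℝ m₁).eval x * (U ℝ m₂).eval x =
      TnsOdd |(m₁ : ℤ) - m₂| x - TnsOdd ((m₁ : ℤ) + m₂ + 2) x := by
  have habs : T ℝ |(m₁ : ℤ) - m₂| = T ℝ ((m₁ : ℤ) - m₂) := by
    rcases abs_choice ((m₁ : ℤ) - m₂) with h' | h' <;> rw [h']
    exact T_neg ℝ _
  have key := congr_arg (Polynomial.eval x)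
    (two_one_sub_X_sq_mul_U_mul_U ℝ (m₁ : ℤ) (m₂ : ℤ))
  simp only [eval_mul, eval_sub, eval_ofNat, eval_one, eval_pow, eval_X] at key
  have hne : 2 * (1 - x ^ 2) ≠ 0 := by
    intro hc
    have : (1 - x) * (1 + x) = 0 := by nlinarith [hc]
    rcases mul_eq_zero.mp this with h' | h'
    · exact hx1 (by linarith)
    · exact hx2 (by linarith)
  unfold TnsOdd
  rw [habs, div_sub_div_same, eq_div_iff hne]
  linear_combination key
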